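/- Let Λ be a numerical semigroup with elements λ_0 = 0 < λ_1 < λ_2 < ⋯, conductor c = λ_L, and let λ_s be a right primitive element of Λ with s − 1 ≥ L. Set Λ̃ = Λ ∖ {λ_s}. Then the order-(s−1) seeds of Λ̃ are exactly λ_s + 1 and λ_s + 2. -/

import Mathlib

/-- A numerical semigroup: a cofinite additive submonoid of ℕ. -/
structure NumericalSemigroup where
  carrier : Set ℕ
  zero_mem : 0 ∈ carrier
  add_mem : ∀ a b : ℕ, a ∈ carrier → b ∈ carrier → a + b ∈ carrier
  cofinite : (carrierᶜ : Set ℕ).Finite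

namespace NumericalSemigroup

/-- The genus: the number of gaps (elements of ℕ not in the semigroup). -/
noncomputable def genus (Λ : NumericalSemigroup) : ℕ := Λ.carrierᶜ.ncard

/-- The conductor: the least `c` such that every `n ≥ c` belongs to the semigroup
(equivalently, one plus the largest gap). -/
noncomputable def conductor (Λ : NumericalSemigroup) : ℕ := sInf {c | ∀ n, c ≤ n → n ∈ Λ.carrier}

/-- The multiplicity: the smallest nonzero element. -/
noncomputable def multiplicity (Λ : NumericalSemigroup) : ℕ := sInf {x | x ∈ Λ.carrier ∧ x ≠ 0}

/-- The increasing enumeration `λ_0 = 0 < λ_1 < λ_2 < ⋯` of the elements. -/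
noncomputable def el (Λ : NumericalSemigroup) (i : ℕ) : ℕ := Nat.nth (fun n => n ∈ Λ.carrier) i

/-- `L`: the number of elements smaller than the conductor (the left elements). -/
noncomputable def leftCount (Λ : NumericalSemigroup) : ℕ := {x ∈ Λ.carrier | x < Λ.conductor}.ncard

/-- A primitive element (minimal generator): a nonzero element that is not a sum of
two nonzero elements of the semigroup. -/
noncomputable def IsPrimitive (Λ : NumericalSemigroup) (x : ℕ) : Prop :=
  x ∈ Λ.carrier ∧ x ≠ 0 ∧
    ¬ ∃ a b : ℕ, a ∈ Λ.carrier ∧ b ∈ Λ.carrier ∧ a ≠ 0 ∧ b ≠ 0 ∧ a + b = x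

/-- The set of primitive elements. -/
noncomputable def primitives (Λ : NumericalSemigroup) : Set ℕ := {x | Λ.IsPrimitive x}

/-- A right primitive element: a primitive element ≥ the conductor. -/
noncomputable def IsRightPrimitive (Λ : NumericalSemigroup) (x : ℕ) : Prop :=
  Λ.IsPrimitive x ∧ Λ.conductor ≤ x

/-- An element `x = λ_s ≥ c` is an order-`i` seed when
`λ_s + λ_i ≠ λ_j + λ_k` for all `i < j ≤ k < s`
(the condition `k < s` is expressed as `λ_k < x`). -/
noncomputable def IsSeed (Λ : NumericalSemigroup) (i x : ℕ) : Prop :=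
  x ∈ Λ.carrier ∧ Λ.conductor ≤ x ∧
    ∀ j k : ℕ, i < j → j ≤ k → Λ.el k < x → x + Λ.el i ≠ Λ.el j + Λ.el k

/-- `q = ⌈c/m⌉`. -/
noncomputable def q (Λ : NumericalSemigroup) : ℕ :=
  (Λ.conductor + Λ.multiplicity - 1) / Λ.multiplicity

/-- `ρ = q·m − c`. -/
noncomputable def rho (Λ : NumericalSemigroup) : ℕ := Λ.q * Λ.multiplicity - Λ.conductor

/-- The Eliahou constant
`E(Λ) = #(P ∩ {x < c})·L − q·(m − #(P ∩ {x ≥ c})) + ρ`. -/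
noncomputable def eliahou (Λ : NumericalSemigroup) : ℤ :=
  ({x ∈ Λ.primitives | x < Λ.conductor}.ncard : ℤ) * (Λ.leftCount : ℤ)
    - (Λ.q : ℤ) * ((Λ.multiplicity : ℤ) - ({x ∈ Λ.primitives | Λ.conductor ≤ x}.ncard : ℤ))
    + (Λ.rho : ℤ)

/-- `Λ = ⟨a,b,c⟩|_κ`: `Λ` is the smallest numerical semigroup containing
`a`, `b`, `c` and every integer `≥ κ`. -/
noncomputable def IsSmallestContaining (Λ : NumericalSemigroup) (a b c κ : ℕ) : Prop :=
  a ∈ Λ.carrier ∧ b ∈ Λ.carrier ∧ c ∈ Λ.carrier ∧ (∀ n, κ ≤ n → n ∈ Λ.carrier) ∧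
    ∀ M : NumericalSemigroup,
      a ∈ M.carrier → b ∈ M.carrier → c ∈ M.carrier → (∀ n, κ ≤ n → n ∈ M.carrier) →
        Λ.carrier ⊆ M.carrier

end NumericalSemigroup

attribute [local instance] Classical.propDecidable

lemma my_count_congr {p q : ℕ → Prop} (n : ℕ) (h : ∀ m, m < n → (p m ↔ q m)) :
    Nat.count p n = Nat.count q n := by
  classical
  rw [Nat.count_eq_card_filter_range, Nat.count_eq_card_filter_range]
  congr 1
  apply Finset.filter_congr
  intro x hx
  simpa using h x (Finset.mem_range.mp hx)

namespace NumericalSemigroup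

lemma carrier_infinite (Λ : NumericalSemigroup) : Λ.carrier.Infinite := by
  have := Λ.cofinite.infinite_compl
  simpa using this

lemma conductor_spec (Λ : NumericalSemigroup) : ∀ n, Λ.conductor ≤ n → n ∈ Λ.carrier := by
  have hne : {c | ∀ n, c ≤ n → n ∈ Λ.carrier}.Nonempty := by
    obtain ⟨m, hm⟩ := Λ.cofinite.bddAbove
    refine ⟨m + 1, fun n hn => ?_⟩
    by_contra h
    exact absurd (hm h) (by omega)
  exact Nat.sInf_mem hne

lemma conductor_le (Λ : NumericalSemigroup) {c : ℕ} (h : ∀ n, c ≤ n → n ∈ Λ.carrier) :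
    Λ.conductor ≤ c := Nat.sInf_le h

lemma count_conductor (Λ : NumericalSemigroup) :
    Nat.count (fun n => n ∈ Λ.carrier) Λ.conductor = Λ.leftCount := by
  classical
  rw [Nat.count_eq_card_filter_range]
  unfold leftCount
  have : {x ∈ Λ.carrier | x < Λ.conductor}
      = ↑({x ∈ Finset.range Λ.conductor | x ∈ Λ.carrier}) := by
    ext x
    simp [Finset.mem_range, and_comm]
  rw [this, Set.ncard_coe_finset]

end NumericalSemigroup

/-- New-order seeds, case `i = s - 1`: the order-`(s-1)` seeds of `Λ̃ = Λ \ {λ_s}`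
are exactly `λ_s + 1` and `λ_s + 2`. -/
theorem newOrderSeeds_of_eq_sub_one
    (Λ : NumericalSemigroup) (s : ℕ) (hs : Λ.IsRightPrimitive (Λ.el s))
    (hL : Λ.leftCount ≤ s - 1) (hs1 : 1 ≤ s)
    (M : NumericalSemigroup) (hM : M.carrier = Λ.carrier \ {Λ.el s}) :
    ∀ x : ℕ, M.IsSeed (s - 1) x ↔ (x = Λ.el s + 1 ∨ x = Λ.el s + 2) := by
  classical
  set c := Λ.conductor with hcdef
  set ls := Λ.el s with hlsdef
  have hΛinf : Λ.carrier.Infinite := Λ.carrier_infinite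
  have hMinf : M.carrier.Infinite := M.carrier_infinite
  have hcspec := Λ.conductor_spec
  have hlsmem : ls ∈ Λ.carrier := hs.1.1
  have hlsc : c ≤ ls := hs.2
  have countΛ : ∀ i, Nat.count (fun n => n ∈ Λ.carrier) (Λ.el i) = i := fun i =>
    Nat.count_nth_of_infinite (p := fun n => n ∈ Λ.carrier) hΛinf i
  have hLcount : Nat.count (fun n => n ∈ Λ.carrier) c = Λ.leftCount := Λ.count_conductor
  have hsL : Λ.leftCount < s := by omega
  have hlsne : ls ≠ c := by
    intro h
    have h2 : Nat.count (fun n => n ∈ Λ.carrier) ls = s := countΛ s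
    rw [h, hLcount] at h2
    omega
  have hls1 : c + 1 ≤ ls := by omega
  have hpred : ls - 1 ∈ Λ.carrier := hcspec _ (by omega)
  have hpredcount : Nat.count (fun n => n ∈ Λ.carrier) (ls - 1) = s - 1 := by
    have h1 : Nat.count (fun n => n ∈ Λ.carrier) (ls - 1 + 1)
        = Nat.count (fun n => n ∈ Λ.carrier) (ls - 1) + 1 := by
      rw [Nat.count_succ, if_pos hpred]
    have h2 : ls - 1 + 1 = ls := by omega
    have h3 : Nat.count (fun n => n ∈ Λ.carrier) ls = s := countΛ s
    rw [h2] at h1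
    omega
  have hMmem : ∀ n, n ∈ M.carrier ↔ (n ∈ Λ.carrier ∧ n ≠ ls) := by
    intro n; rw [hM]; simp [Set.mem_diff]
  have hMge : ∀ n, ls + 1 ≤ n → n ∈ M.carrier := fun n hn =>
    (hMmem n).2 ⟨hcspec n (by omega), by omega⟩
  have hcountM_pred : Nat.count (fun n => n ∈ M.carrier) (ls - 1) = s - 1 := by
    rw [my_count_congr (q := fun n => n ∈ Λ.carrier) (ls - 1) ?_, hpredcount]
    intro m hm
    rw [hMmem m]
    exact ⟨fun h => h.1, fun h => ⟨h, by omega⟩⟩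
  have hMel : M.el (s - 1) = ls - 1 := by
    have h := Nat.nth_count (p := fun n => n ∈ M.carrier)
      ((hMmem (ls - 1)).2 ⟨hpred, by omega⟩)
    rw [hcountM_pred] at h
    exact h
  have hcountM_ls : Nat.count (fun n => n ∈ M.carrier) ls = s := by
    rw [my_count_congr (q := fun n => n ∈ Λ.carrier) ls ?_]
    exact countΛ s
    intro m hm
    rw [hMmem m]
    exact ⟨fun h => h.1, fun h => ⟨h, by omega⟩⟩
  have hcountM_succ : Nat.count (fun n => n ∈ M.carrier) (ls + 1) = s := by
    rw [Nat.count_succ, if_neg (by rw [hMmem]; simp), hcountM_ls]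
    omega
  have hMelS : M.el s = ls + 1 := by
    have h := Nat.nth_count (p := fun n => n ∈ M.carrier) (hMge (ls + 1) le_rfl)
    rw [hcountM_succ] at h
    exact h
  have hMelge : ∀ j, s ≤ j → ls + 1 ≤ M.el j := by
    intro j hj
    calc ls + 1 = M.el s := hMelS.symm
      _ ≤ M.el j := (Nat.nth_le_nth hMinf).2 hj
  have hMcond : M.conductor ≤ ls + 1 := M.conductor_le (fun n hn => hMge n hn)
  intro x
  constructor
  · rintro ⟨hxM, hxc, hseed⟩
    have hlsnotM : ls ∉ M.carrier := by rw [hMmem]; simp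
    have hcondgt : ls < M.conductor := by
      by_contra h
      exact hlsnotM (M.conductor_spec ls (by omega))
    have hxgt : ls + 1 ≤ x := by omega
    by_contra hne
    push_neg at hne
    have hx3 : ls + 3 ≤ x := by omega
    have hx2M : x - 2 ∈ M.carrier := hMge _ (by omega)
    set k := Nat.count (fun m => m ∈ M.carrier) (x - 2) with hk
    have hMelk : M.el k = x - 2 := Nat.nth_count hx2M
    have hks : s ≤ k := by
      have h := Nat.count_monotone (p := fun m => m ∈ M.carrier)
        (show ls + 1 ≤ x - 2 by omega)
      rw [hcountM_succ] at h
      exact h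
    exact hseed s k (by omega) hks (by rw [hMelk]; omega)
      (by rw [hMel, hMelS, hMelk]; omega)
  · rintro (rfl | rfl)
    · refine ⟨hMge _ le_rfl, hMcond, ?_⟩
      intro j k hj hjk hke
      exfalso
      have h1 := hMelge j (by omega)
      have h2 : M.el j ≤ M.el k := (Nat.nth_le_nth hMinf).2 hjk
      omega
    · refine ⟨hMge _ (by omega), by omega, ?_⟩
      intro j k hj hjk hke
      have h1 := hMelge j (by omega)
      have h2 : M.el j ≤ M.el k := (Nat.nth_le_nth hMinf).2 hjk
      rw [hMel]
      omega
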